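/- Let p ≥ 1 and let [ℓ_1,u_1),…,[ℓ_p,u_p) be nonempty half-open real intervals with ℓ_1 ≤ … ≤ ℓ_p and with u_1,…,u_p pairwise distinct. For m ∈ {1,…,p} let β(m) be the least h ∈ {1,…,p} with ℓ_h ≥ u_m, or p+1 if none exists. For i ∈ {1,…,p} and 0 ≤ h ≤ p−i let α_i(h) be the unique m ∈ {i,…,p} such that u_m is the (h+1)-th smallest value among u_i,…,u_p. For i ∈ {1,…,p} and j ≤ p−i, let h_1 < … < h_{d_{i,j}} enumerate {h ∈ {0,…,j} : h = 0 or β(α_i(h−1)) < β(α_i(h))} (so h_1 = 0). Then for all i ∈ {1,…,p+1} and j ∈ ℕ: if i + j ≥ p + 1 then D(i,j) = 0, and if i + j < p + 1 then D(i,j) = min_{k ∈ {1,…,d_{i,j}}} D(β(α_i(h_k)), j − h_k) + 1. -/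
import Mathlib


open Classical

/-- The recursion for the exception-allowable minimum intersecting set problem.
Intervals `[ℓ h, u h)` (`h = 1,…,p`) are sorted by `ℓ` with pairwise distinct
upper endpoints. `D i j` is the least cardinality of a finite set missing at most
`j` of the intervals indexed by `i,…,p`. `β m` is the least `h ∈ {1,…,p}` with
`ℓ h ≥ u m` (or `p+1` if none), and `α i h` is the index in `{i,…,p}` of the
`(h+1)`-th smallest value among `u i, …, u p` (characterized by having exactly
`h` strictly smaller values among them). Then `D i j = 0` whenever
`i + j ≥ p + 1`, and otherwise `D i j` is the minimum of
`D (β (α i h)) (j - h) + 1` over the indices `h ≤ j` with `h = 0` or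
`β (α i (h-1)) < β (α i h)`. -/
theorem exception_allowable_recursion
    (p : ℕ) (hp : 1 ≤ p) (ℓ u : ℕ → ℝ)
    (hne : ∀ h, 1 ≤ h → h ≤ p → ℓ h < u h)
    (hsorted : ∀ h, 1 ≤ h → h < p → ℓ h ≤ ℓ (h + 1))
    (hdist : ∀ h h', 1 ≤ h → h ≤ p → 1 ≤ h' → h' ≤ p → u h = u h' → h = h')
    (β : ℕ → ℕ)
    (hβ : ∀ m, 1 ≤ m → m ≤ p →
      ((∃ h, 1 ≤ h ∧ h ≤ p ∧ u m ≤ ℓ h) →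
        IsLeast {h | 1 ≤ h ∧ h ≤ p ∧ u m ≤ ℓ h} (β m)) ∧
      ((¬ ∃ h, 1 ≤ h ∧ h ≤ p ∧ u m ≤ ℓ h) → β m = p + 1))
    (α : ℕ → ℕ → ℕ)
    (hα : ∀ i h, 1 ≤ i → i ≤ p → h ≤ p - i →
      i ≤ α i h ∧ α i h ≤ p ∧
        ((Finset.Icc i p).filter (fun g => u g < u (α i h))).card = h)
    (D : ℕ → ℕ → ℕ)
    (hD : ∀ i j, 1 ≤ i → i ≤ p + 1 →
      D i j = sInf {c | ∃ S : Finset ℝ, S.card = c ∧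
        ((Finset.Icc i p).filter
          (fun h => ∀ x ∈ S, x ∉ Set.Ico (ℓ h) (u h))).card ≤ j}) :
    ∀ i j, 1 ≤ i → i ≤ p + 1 →
      (p + 1 ≤ i + j → D i j = 0) ∧
      (i + j < p + 1 →
        D i j = sInf {v | ∃ h, h ≤ j ∧
          (h = 0 ∨ β (α i (h - 1)) < β (α i h)) ∧
          v = D (β (α i h)) (j - h) + 1}) := by
  -- ℓ is monotone on [1, p]
  have lmono : ∀ b a, 1 ≤ a → a ≤ b → b ≤ p → ℓ a ≤ ℓ b := by
    intro b
    induction b with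
    | zero => intro a ha hab hbp; omega
    | succ n ih =>
      intro a ha hab hbp
      rcases eq_or_lt_of_le hab with h | h
      · rw [h]
      · have han : a ≤ n := by omega
        exact (ih a ha han (by omega)).trans (hsorted n (by omega) (by omega))
  -- β bounds
  have βle : ∀ m, 1 ≤ m → m ≤ p → β m ≤ p + 1 := by
    intro m h1 h2
    by_cases hex : ∃ h, 1 ≤ h ∧ h ≤ p ∧ u m ≤ ℓ h
    · exact le_trans ((hβ m h1 h2).1 hex).1.2.1 (by omega)
    · exact le_of_eq ((hβ m h1 h2).2 hex)
  have βgt : ∀ m, 1 ≤ m → m ≤ p → m < β m := by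
    intro m h1 h2
    by_contra hc
    push_neg at hc
    by_cases hex : ∃ h, 1 ≤ h ∧ h ≤ p ∧ u m ≤ ℓ h
    · obtain ⟨⟨hb1, hb2, hb3⟩, _⟩ := (hβ m h1 h2).1 hex
      have h4 : ℓ (β m) ≤ ℓ m := lmono m (β m) hb1 hc h2
      have h5 := hne m h1 h2
      linarith
    · have := (hβ m h1 h2).2 hex; omega
  have βiff : ∀ m g, 1 ≤ m → m ≤ p → 1 ≤ g → g ≤ p → (u m ≤ ℓ g ↔ β m ≤ g) := by
    intro m g hm1 hm2 hg1 hg2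
    constructor
    · intro hug
      exact ((hβ m hm1 hm2).1 ⟨g, hg1, hg2, hug⟩).2 ⟨hg1, hg2, hug⟩
    · intro hbg
      by_cases hex : ∃ h, 1 ≤ h ∧ h ≤ p ∧ u m ≤ ℓ h
      · obtain ⟨⟨hb1, hb2, hb3⟩, _⟩ := (hβ m hm1 hm2).1 hex
        exact hb3.trans (lmono g (β m) hb1 hbg hg2)
      · have := (hβ m hm1 hm2).2 hex; omega
  have βmono : ∀ a b, 1 ≤ a → a ≤ p → 1 ≤ b → b ≤ p → u a ≤ u b → β a ≤ β b := by
    intro a b ha1 ha2 hb1 hb2 hu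
    by_cases hex : ∃ h, 1 ≤ h ∧ h ≤ p ∧ u b ≤ ℓ h
    · obtain ⟨⟨h1, h2, h3⟩, _⟩ := (hβ b hb1 hb2).1 hex
      exact ((hβ a ha1 ha2).1 ⟨β b, h1, h2, hu.trans h3⟩).2 ⟨h1, h2, hu.trans h3⟩
    · rw [(hβ b hb1 hb2).2 hex]; exact βle a ha1 ha2
  -- strictly smaller u means strictly smaller count
  have countlt : ∀ i m m', m ∈ Finset.Icc i p → m' ∈ Finset.Icc i p → u m < u m' →
      ((Finset.Icc i p).filter (fun g => u g < u m)).card <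
      ((Finset.Icc i p).filter (fun g => u g < u m')).card := by
    intro i m m' hm hm' huu
    apply Finset.card_lt_card
    rw [Finset.ssubset_iff_of_subset]
    · exact ⟨m, Finset.mem_filter.mpr ⟨hm, huu⟩,
        fun hmem => lt_irrefl _ (Finset.mem_filter.mp hmem).2⟩
    · intro g hg
      rw [Finset.mem_filter] at hg ⊢
      exact ⟨hg.1, hg.2.trans huu⟩
  -- uniqueness of the index with a given count
  have αuniq : ∀ i m m', 1 ≤ i → m ∈ Finset.Icc i p → m' ∈ Finset.Icc i p →
      ((Finset.Icc i p).filter (fun g => u g < u m)).card =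
      ((Finset.Icc i p).filter (fun g => u g < u m')).card → m = m' := by
    intro i m m' hi hm hm' hc
    have hm2 := Finset.mem_Icc.mp hm
    have hm'2 := Finset.mem_Icc.mp hm'
    rcases lt_trichotomy (u m) (u m') with h | h | h
    · exact absurd hc (ne_of_lt (countlt i m m' hm hm' h))
    · exact hdist m m' (by omega) hm2.2 (by omega) hm'2.2 h
    · exact absurd hc.symm (ne_of_lt (countlt i m' m hm' hm h))
  -- u strictly increases along α i ·
  have αult : ∀ i h, 1 ≤ i → i ≤ p → 1 ≤ h → h ≤ p - i →
      u (α i (h - 1)) < u (α i h) := by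
    intro i h hi1 hi2 hh1 hh2
    obtain ⟨ha1, ha2, hc1⟩ := hα i (h - 1) hi1 hi2 (by omega)
    obtain ⟨hb1, hb2, hc2⟩ := hα i h hi1 hi2 hh2
    rcases lt_trichotomy (u (α i (h - 1))) (u (α i h)) with hlt | heq | hgt
    · exact hlt
    · exfalso
      have heq2 := hdist _ _ (by omega) ha2 (by omega) hb2 heq
      rw [heq2] at hc1
      omega
    · exfalso
      have := countlt i (α i h) (α i (h - 1)) (Finset.mem_Icc.mpr ⟨hb1, hb2⟩)
        (Finset.mem_Icc.mpr ⟨ha1, ha2⟩) hgt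
      omega
  -- feasibility: the defining set for D is nonempty
  have feas : ∀ i j : ℕ, 1 ≤ i →
      {c : ℕ | ∃ S : Finset ℝ, S.card = c ∧
        ((Finset.Icc i p).filter
          (fun h => ∀ x ∈ S, x ∉ Set.Ico (ℓ h) (u h))).card ≤ j}.Nonempty := by
    intro i j hi
    refine ⟨((Finset.Icc 1 p).image ℓ).card, (Finset.Icc 1 p).image ℓ, rfl, ?_⟩
    refine le_trans (le_of_eq ?_) (Nat.zero_le j)
    rw [Finset.card_eq_zero, Finset.filter_eq_empty_iff]
    intro g hg hcon
    rw [Finset.mem_Icc] at hg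
    exact hcon (ℓ g) (Finset.mem_image_of_mem ℓ (Finset.mem_Icc.mpr ⟨by omega, hg.2⟩))
      ⟨le_refl _, hne g (by omega) hg.2⟩
  -- an optimal set exists
  have Dmem : ∀ i j : ℕ, 1 ≤ i → i ≤ p + 1 →
      ∃ S : Finset ℝ, S.card = D i j ∧
        ((Finset.Icc i p).filter
          (fun h => ∀ x ∈ S, x ∉ Set.Ico (ℓ h) (u h))).card ≤ j := by
    intro i j h1 h2
    have h3 := Nat.sInf_mem (feas i j h1)
    rw [← hD i j h1 h2] at h3
    exact h3
  -- any feasible set bounds D from above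
  have Dle : ∀ i j : ℕ, 1 ≤ i → i ≤ p + 1 → ∀ S : Finset ℝ,
      ((Finset.Icc i p).filter
        (fun h => ∀ x ∈ S, x ∉ Set.Ico (ℓ h) (u h))).card ≤ j → D i j ≤ S.card := by
    intro i j h1 h2 S hS
    rw [hD i j h1 h2]
    exact Nat.sInf_le ⟨S, rfl, hS⟩
  intro i j hi1 hi2
  constructor
  · -- trivial case
    intro hij
    rw [hD i j hi1 hi2]
    apply Nat.sInf_eq_zero.mpr
    left
    refine ⟨∅, Finset.card_empty, ?_⟩
    calc ((Finset.Icc i p).filter _).card ≤ (Finset.Icc i p).card :=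
          Finset.card_filter_le _ _
      _ = p + 1 - i := Nat.card_Icc i p
      _ ≤ j := by omega
  · intro hij
    have hip : i ≤ p := by omega
    have hjpi : j ≤ p - i := by omega
    apply le_antisymm
    · -- D i j ≤ sInf of RHS
      have hrhs : {v | ∃ h, h ≤ j ∧
          (h = 0 ∨ β (α i (h - 1)) < β (α i h)) ∧
          v = D (β (α i h)) (j - h) + 1}.Nonempty :=
        ⟨D (β (α i 0)) (j - 0) + 1, 0, Nat.zero_le _, Or.inl rfl, rfl⟩
      obtain ⟨h, hhj, -, hv⟩ := Nat.sInf_mem hrhs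
      rw [hv]
      -- show D i j ≤ D (β (α i h)) (j - h) + 1
      obtain ⟨ham1, ham2, hamc⟩ := hα i h hi1 hip (le_trans hhj hjpi)
      have hm1 : 1 ≤ α i h := by omega
      have hb1 : 1 ≤ β (α i h) := by have := βgt (α i h) hm1 ham2; omega
      have hb2 : β (α i h) ≤ p + 1 := βle (α i h) hm1 ham2
      obtain ⟨S', hS'card, hS'miss⟩ := Dmem (β (α i h)) (j - h) hb1 hb2
      have hTne : (((Finset.Icc 1 p).filter (fun g => ℓ g < u (α i h))).image ℓ).Nonempty :=
        Finset.Nonempty.image ⟨α i h, Finset.mem_filter.mpr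
          ⟨Finset.mem_Icc.mpr ⟨hm1, ham2⟩, hne (α i h) hm1 ham2⟩⟩ ℓ
      set x := (((Finset.Icc 1 p).filter (fun g => ℓ g < u (α i h))).image ℓ).max' hTne
        with hx
      have hxlt : x < u (α i h) := by
        obtain ⟨g, hg, hgx⟩ := Finset.mem_image.mp (Finset.max'_mem _ hTne)
        rw [hx, ← hgx]
        exact (Finset.mem_filter.mp hg).2
      have hxge : ∀ g, 1 ≤ g → g ≤ p → ℓ g < u (α i h) → ℓ g ≤ x := fun g h1 h2 h3 =>
        Finset.le_max' _ _ (Finset.mem_image_of_mem ℓ (Finset.mem_filter.mpr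
          ⟨Finset.mem_Icc.mpr ⟨h1, h2⟩, h3⟩))
      have hmiss : ((Finset.Icc i p).filter
          (fun g => ∀ y ∈ insert x S', y ∉ Set.Ico (ℓ g) (u g))).card ≤ j := by
        have hsub : (Finset.Icc i p).filter
            (fun g => ∀ y ∈ insert x S', y ∉ Set.Ico (ℓ g) (u g)) ⊆
            ((Finset.Icc i p).filter (fun g => u g < u (α i h))) ∪
            ((Finset.Icc (β (α i h)) p).filter
              (fun g => ∀ y ∈ S', y ∉ Set.Ico (ℓ g) (u g))) := by
          intro g hg
          rw [Finset.mem_filter] at hg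
          obtain ⟨hgIcc, hgmiss⟩ := hg
          have hgIcc' := Finset.mem_Icc.mp hgIcc
          by_cases hcase : u g < u (α i h)
          · exact Finset.mem_union_left _ (Finset.mem_filter.mpr ⟨hgIcc, hcase⟩)
          · push_neg at hcase
            have hg1 : 1 ≤ g := by omega
            have hβg : β (α i h) ≤ g := by
              by_contra hc
              push_neg at hc
              have hlg : ℓ g < u (α i h) := by
                by_contra hc2
                push_neg at hc2
                exact absurd ((βiff (α i h) g hm1 ham2 hg1 hgIcc'.2).mp hc2) (by omega)
              exact hgmiss x (Finset.mem_insert_self x S')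
                ⟨hxge g hg1 hgIcc'.2 hlg, lt_of_lt_of_le hxlt hcase⟩
            refine Finset.mem_union_right _ (Finset.mem_filter.mpr
              ⟨Finset.mem_Icc.mpr ⟨hβg, hgIcc'.2⟩, ?_⟩)
            intro y hy
            exact hgmiss y (Finset.mem_insert_of_mem hy)
        calc ((Finset.Icc i p).filter
              (fun g => ∀ y ∈ insert x S', y ∉ Set.Ico (ℓ g) (u g))).card
            ≤ (((Finset.Icc i p).filter (fun g => u g < u (α i h))) ∪
              ((Finset.Icc (β (α i h)) p).filter
                (fun g => ∀ y ∈ S', y ∉ Set.Ico (ℓ g) (u g)))).card :=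
              Finset.card_le_card hsub
          _ ≤ ((Finset.Icc i p).filter (fun g => u g < u (α i h))).card +
              ((Finset.Icc (β (α i h)) p).filter
                (fun g => ∀ y ∈ S', y ∉ Set.Ico (ℓ g) (u g))).card :=
              Finset.card_union_le _ _
          _ ≤ j := by rw [hamc]; omega
      calc D i j ≤ (insert x S').card := Dle i j hi1 hi2 (insert x S') hmiss
        _ ≤ S'.card + 1 := Finset.card_insert_le x S'
        _ = D (β (α i h)) (j - h) + 1 := by rw [hS'card]
    · -- sInf of RHS ≤ D i j
      obtain ⟨S, hScard, hSmiss⟩ := Dmem i j hi1 hi2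
      -- there is a covered interval
      have hC : ((Finset.Icc i p).filter
          (fun g => ∃ x ∈ S, x ∈ Set.Ico (ℓ g) (u g))).Nonempty := by
        by_contra hc
        rw [Finset.not_nonempty_iff_eq_empty, Finset.filter_eq_empty_iff] at hc
        have hall : (Finset.Icc i p).filter
            (fun g => ∀ x ∈ S, x ∉ Set.Ico (ℓ g) (u g)) = Finset.Icc i p := by
          apply Finset.filter_true_of_mem
          intro g hg y hy hmem
          exact hc hg ⟨y, hy, hmem⟩
        rw [hall, Nat.card_Icc] at hSmiss
        omega
      obtain ⟨m0, hm0C, hm0min⟩ := Finset.exists_min_image _ u hC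
      rw [Finset.mem_filter] at hm0C
      obtain ⟨hm0Icc, x0, hx0S, hx0mem⟩ := hm0C
      have hm0Icc' := Finset.mem_Icc.mp hm0Icc
      have hm01 : 1 ≤ m0 := by omega
      -- the intervals with smaller u are all missed by S
      have hFM : (Finset.Icc i p).filter (fun g => u g < u m0) ⊆
          (Finset.Icc i p).filter (fun g => ∀ x ∈ S, x ∉ Set.Ico (ℓ g) (u g)) := by
        intro g hg
        rw [Finset.mem_filter] at hg ⊢
        refine ⟨hg.1, fun y hy hymem => ?_⟩
        exact absurd (hm0min g (Finset.mem_filter.mpr ⟨hg.1, y, hy, hymem⟩))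
          (not_le.mpr hg.2)
      have hh0j : ((Finset.Icc i p).filter (fun g => u g < u m0)).card ≤ j :=
        le_trans (Finset.card_le_card hFM) hSmiss
      have hh0pi : ((Finset.Icc i p).filter (fun g => u g < u m0)).card ≤ p - i := by
        have hsub : (Finset.Icc i p).filter (fun g => u g < u m0) ⊆
            (Finset.Icc i p).erase m0 := by
          intro g hg
          rw [Finset.mem_filter] at hg
          refine Finset.mem_erase.mpr ⟨fun hgm => ?_, hg.1⟩
          rw [hgm] at hg
          exact lt_irrefl _ hg.2
        have h1 := Finset.card_le_card hsub
        rw [Finset.card_erase_of_mem hm0Icc, Nat.card_Icc] at h1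
        omega
      set h0 := ((Finset.Icc i p).filter (fun g => u g < u m0)).card with hh0
      obtain ⟨hαa, hαb, hαc⟩ := hα i h0 hi1 hip hh0pi
      have hm0α : m0 = α i h0 :=
        αuniq i m0 (α i h0) hi1 hm0Icc (Finset.mem_Icc.mpr ⟨hαa, hαb⟩) (by rw [hαc])
      -- minimal h' with the same β-value
      have hPe : ∃ k, k ≤ h0 ∧ β (α i k) = β (α i h0) := ⟨h0, le_refl _, rfl⟩
      classical
      obtain ⟨h', hh'le, hh'eq, hh'min⟩ : ∃ h', h' ≤ h0 ∧ β (α i h') = β (α i h0) ∧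
          ∀ k < h', ¬ β (α i k) = β (α i h0) := by
        have hPe2 : ∃ k, β (α i k) = β (α i h0) := ⟨h0, rfl⟩
        exact ⟨Nat.find hPe2, Nat.find_min' hPe2 rfl, Nat.find_spec hPe2,
          fun k hk => Nat.find_min hPe2 hk⟩
      have hcond : h' = 0 ∨ β (α i (h' - 1)) < β (α i h') := by
        rcases Nat.eq_zero_or_pos h' with hz | hpos
        · exact Or.inl hz
        · right
          have hlt := αult i h' hi1 hip hpos (le_trans hh'le hh0pi)
          obtain ⟨ha1, ha2, -⟩ := hα i (h' - 1) hi1 hip (by omega)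
          obtain ⟨hb1, hb2, -⟩ := hα i h' hi1 hip (le_trans hh'le hh0pi)
          have hmono := βmono (α i (h' - 1)) (α i h') (by omega) ha2 (by omega) hb2
            (le_of_lt hlt)
          have hne2 := hh'min (h' - 1) (by omega)
          rw [← hh'eq] at hne2
          omega
      -- build the reduced set
      have hb0 : m0 < β m0 := βgt m0 hm01 hm0Icc'.2
      have hb0ub : β m0 ≤ p + 1 := βle m0 hm01 hm0Icc'.2
      have hS'sub : S.filter (fun y => u m0 ≤ y) ⊂ S := by
        refine Finset.filter_ssubset.mpr ⟨x0, hx0S, ?_⟩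
        exact not_le.mpr hx0mem.2
      have hS'card : (S.filter (fun y => u m0 ≤ y)).card < S.card :=
        Finset.card_lt_card hS'sub
      -- misses of the reduced set in [β m0, p]
      have hmiss2 : ((Finset.Icc (β m0) p).filter
          (fun g => ∀ y ∈ S.filter (fun y => u m0 ≤ y), y ∉ Set.Ico (ℓ g) (u g))).card
          ≤ j - h' := by
        have hsub2 : (Finset.Icc (β m0) p).filter
            (fun g => ∀ y ∈ S.filter (fun y => u m0 ≤ y), y ∉ Set.Ico (ℓ g) (u g)) ⊆
            ((Finset.Icc i p).filter (fun g => ∀ x ∈ S, x ∉ Set.Ico (ℓ g) (u g))) \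
            ((Finset.Icc i p).filter (fun g => u g < u m0)) := by
          intro g hg
          rw [Finset.mem_filter] at hg
          obtain ⟨hgIcc, hgmiss⟩ := hg
          have hgIcc' := Finset.mem_Icc.mp hgIcc
          have hg1 : 1 ≤ g := by omega
          have hgi : i ≤ g := by omega
          have hℓg : u m0 ≤ ℓ g :=
            (βiff m0 g hm01 hm0Icc'.2 hg1 hgIcc'.2).mpr hgIcc'.1
          rw [Finset.mem_sdiff, Finset.mem_filter, Finset.mem_filter]
          refine ⟨⟨Finset.mem_Icc.mpr ⟨hgi, hgIcc'.2⟩, fun y hy hymem => ?_⟩, ?_⟩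
          · exact hgmiss y (Finset.mem_filter.mpr ⟨hy, hℓg.trans hymem.1⟩) hymem
          · rintro ⟨-, hug⟩
            have := hne g hg1 hgIcc'.2
            linarith
        have h1 := Finset.card_le_card hsub2
        rw [Finset.card_sdiff_of_subset hFM] at h1
        omega
      have hb0' : 1 ≤ β m0 := by omega
      have hDb : D (β m0) (j - h') ≤ (S.filter (fun y => u m0 ≤ y)).card :=
        Dle (β m0) (j - h') hb0' hb0ub _ hmiss2
      have hfin : D (β (α i h')) (j - h') + 1 ≤ D i j := by
        rw [hh'eq, ← hm0α, ← hScard]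
        omega
      exact le_trans (Nat.sInf_le ⟨h', le_trans hh'le hh0j, hcond, rfl⟩) hfin
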